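/- Let ζ(t) = δ|𝐗(t)| + √(1-δ²) X_{m+1}(t) with 𝐗(t) = (X_1(t),...,X_m(t)) for independent copies X_i of a centered stationary Gaussian process with covariance ρ, and δ ∈ (0,1]. Define ζ*(qt) = δ|𝐗(qt) - ρ(qt)𝐗(0)| + √(1-δ²)(X_{m+1}(qt) - ρ(qt)X_{m+1}(0)). Then ζ*(qt) is independent of ζ(0), ζ*(qt) has the same distribution as √(1-ρ(qt)²)·ζ(0), and on the event {ζ(qt) > ζ(0) > u} one has ζ*(qt) > u(1 - ρ(qt)). -/

import Mathlib

open MeasureTheory ProbabilityTheory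

/-- The skew-gaussian functional. -/
noncomputable def zetaF (m : ℕ) (δ : ℝ) : (Fin (m + 1) → ℝ) → ℝ :=
  fun y => δ * Real.sqrt (∑ i : Fin m, (y i.castSucc) ^ 2)
    + Real.sqrt (1 - δ ^ 2) * y (Fin.last m)

lemma zetaF_measurable (m : ℕ) (δ : ℝ) : Measurable (zetaF m δ) := by
  unfold zetaF
  exact ((Finset.measurable_sum Finset.univ fun i _ =>
      (measurable_pi_apply i.castSucc).pow_const 2).sqrt.const_mul δ).add
    ((measurable_pi_apply (Fin.last m)).const_mul _)

/-- Joint law of an independent family is the product of the marginals. -/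
lemma iIndepFun_map_pi {Ω : Type*} [MeasurableSpace Ω] (P : Measure Ω)
    [IsProbabilityMeasure P] {ι : Type*} [Fintype ι] {β : Type*} [MeasurableSpace β]
    (f : ι → Ω → β) (hmeas : ∀ i, Measurable (f i))
    (hindep : iIndepFun f P) :
    Measure.map (fun ω i => f i ω) P = Measure.pi (fun i => Measure.map (f i) P) := by
  have : ∀ i, IsProbabilityMeasure (Measure.map (f i) P) :=
    fun i => Measure.isProbabilityMeasure_map (hmeas i).aemeasurable
  refine (Measure.pi_eq (μ := fun i => Measure.map (f i) P) fun s hs => ?_).symm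
  rw [Measure.map_apply (measurable_pi_iff.mpr hmeas) (MeasurableSet.univ_pi hs)]
  have hpre : (fun ω i => f i ω) ⁻¹' (Set.pi Set.univ s) = ⋂ i, f i ⁻¹' s i := by
    ext ω; simp [Set.mem_pi]
  rw [hpre, hindep.meas_iInter fun i => ⟨s i, hs i, rfl⟩]
  exact Finset.prod_congr rfl fun i _ => (Measure.map_apply (hmeas i) (hs i)).symm

/-- Properties of `ζ*(qt) = δ|𝐗(qt) - ρ(qt)𝐗(0)| + √(1-δ²)(X_{m+1}(qt) - ρ(qt)X_{m+1}(0))`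
for the skew-Gaussian process `ζ(t) = δ|𝐗(t)| + √(1-δ²)X_{m+1}(t)`:  `ζ*(qt)` is
independent of `ζ(0)`, has the same law as `√(1-ρ(qt)²) ζ(0)`, and on the event
`{ζ(qt) > ζ(0) > u}` one has `ζ*(qt) > u(1-ρ(qt))`.  Here `X0 i` and `X1 i` denote
`X_i(0)` and `X_i(qt)` and `c = ρ(qt) ∈ [0,1)`. -/
theorem skew_gaussian_zeta_star_properties
    {Ω : Type*} [MeasureSpace Ω] (P : Measure Ω) [IsProbabilityMeasure P]
    (m : ℕ) (hm : 1 ≤ m) (δ : ℝ) (hδ : δ ∈ Set.Ioc (0:ℝ) 1)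
    (c : ℝ) (hc : c ∈ Set.Ico (0:ℝ) 1)
    (X0 X1 : Fin (m + 1) → Ω → ℝ)
    (hmeas0 : ∀ i, Measurable (X0 i)) (hmeas1 : ∀ i, Measurable (X1 i))
    (hindep : iIndepFun (fun i ω => (X0 i ω, X1 i ω)) P)
    (hpair : ∀ i, Measure.map (fun ω => (X0 i ω, X1 i ω)) P
      = Measure.map (fun p : ℝ × ℝ => (p.1, c * p.1 + Real.sqrt (1 - c ^ 2) * p.2))
        ((gaussianReal 0 1).prod (gaussianReal 0 1))) :
    -- ζ*(qt) is independent of ζ(0)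
    IndepFun
      (fun ω => δ * Real.sqrt (∑ i : Fin m, (X1 i.castSucc ω - c * X0 i.castSucc ω) ^ 2)
        + Real.sqrt (1 - δ ^ 2) * (X1 (Fin.last m) ω - c * X0 (Fin.last m) ω))
      (fun ω => δ * Real.sqrt (∑ i : Fin m, (X0 i.castSucc ω) ^ 2)
        + Real.sqrt (1 - δ ^ 2) * X0 (Fin.last m) ω) P ∧
    -- ζ*(qt) has the same law as √(1-c²) ζ(0)
    Measure.map
      (fun ω => δ * Real.sqrt (∑ i : Fin m, (X1 i.castSucc ω - c * X0 i.castSucc ω) ^ 2)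
        + Real.sqrt (1 - δ ^ 2) * (X1 (Fin.last m) ω - c * X0 (Fin.last m) ω)) P
      = Measure.map
          (fun ω => Real.sqrt (1 - c ^ 2) *
            (δ * Real.sqrt (∑ i : Fin m, (X0 i.castSucc ω) ^ 2)
              + Real.sqrt (1 - δ ^ 2) * X0 (Fin.last m) ω)) P ∧
    -- on the event {ζ(qt) > ζ(0) > u}, ζ*(qt) > u(1-c)
    ∀ (u : ℝ) (ω : Ω),
      u < δ * Real.sqrt (∑ i : Fin m, (X0 i.castSucc ω) ^ 2)
          + Real.sqrt (1 - δ ^ 2) * X0 (Fin.last m) ω →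
      δ * Real.sqrt (∑ i : Fin m, (X0 i.castSucc ω) ^ 2)
          + Real.sqrt (1 - δ ^ 2) * X0 (Fin.last m) ω
        < δ * Real.sqrt (∑ i : Fin m, (X1 i.castSucc ω) ^ 2)
          + Real.sqrt (1 - δ ^ 2) * X1 (Fin.last m) ω →
      u * (1 - c)
        < δ * Real.sqrt (∑ i : Fin m, (X1 i.castSucc ω - c * X0 i.castSucc ω) ^ 2)
          + Real.sqrt (1 - δ ^ 2) * (X1 (Fin.last m) ω - c * X0 (Fin.last m) ω) := by
  obtain ⟨hδ0, hδ1⟩ := hδ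
  obtain ⟨hc0, hc1⟩ := hc
  have hc2 : (0:ℝ) ≤ 1 - c ^ 2 := by nlinarith
  set s : ℝ := Real.sqrt (1 - c ^ 2) with hs_def
  have hs0 : 0 ≤ s := Real.sqrt_nonneg _
  have hs2 : s ^ 2 = 1 - c ^ 2 := Real.sq_sqrt hc2
  set μ : Measure ℝ := gaussianReal 0 1 with hμ_def
  set ν : Measure ℝ := gaussianReal 0 ⟨1 - c ^ 2, hc2⟩ with hν_def
  have hνprob : IsProbabilityMeasure ν := by rw [hν_def]; exact instIsProbabilityMeasureGaussianReal _ _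
  -- the scaled gaussian
  have hscale : Measure.map (fun x => s * x) μ = ν := by
    have h := gaussianReal_map_const_mul (μ := 0) (v := 1) s
    have hvar : (⟨1 - c ^ 2, hc2⟩ : NNReal) = NNReal.mk (s ^ 2) (sq_nonneg _) * (1 : NNReal) := by
      ext; show (1 - c ^ 2 : ℝ) = s ^ 2 * 1; rw [hs2, mul_one]
    rw [hν_def, hvar, hμ_def, h, mul_zero]
  -- the residual family
  have hmeasY : ∀ i, Measurable (fun ω => X1 i ω - c * X0 i ω) :=
    fun i => (hmeas1 i).sub ((hmeas0 i).const_mul c)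
  have hψ : Measurable (fun p : ℝ × ℝ => (p.1, p.2 - c * p.1)) :=
    measurable_fst.prodMk (measurable_snd.sub (measurable_fst.const_mul c))
  have hφ : Measurable (fun p : ℝ × ℝ => (p.1, c * p.1 + s * p.2)) :=
    measurable_fst.prodMk ((measurable_fst.const_mul c).add (measurable_snd.const_mul s))
  have hUindep : iIndepFun
      (fun i ω => (X0 i ω, X1 i ω - c * X0 i ω)) P :=
    hindep.comp (fun _ (p : ℝ × ℝ) => (p.1, p.2 - c * p.1)) (fun _ => hψ)
  have hUlaw : ∀ i, Measure.map (fun ω => (X0 i ω, X1 i ω - c * X0 i ω)) P = μ.prod ν := by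
    intro i
    have h1 : (fun ω => (X0 i ω, X1 i ω - c * X0 i ω))
        = (fun p : ℝ × ℝ => (p.1, p.2 - c * p.1)) ∘ (fun ω => (X0 i ω, X1 i ω)) := rfl
    rw [h1, ← Measure.map_map hψ ((hmeas0 i).prodMk (hmeas1 i)), hpair i,
      Measure.map_map hψ hφ]
    have h2 : (fun p : ℝ × ℝ => (p.1, p.2 - c * p.1)) ∘ (fun p : ℝ × ℝ => (p.1, c * p.1 + s * p.2))
        = Prod.map id (fun x => s * x) := by
      funext p; simp [Prod.map]
    rw [h2, ← Measure.map_prod_map (f := id) (g := fun x => s * x) _ _ measurable_id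
        (measurable_id.const_mul s),
      Measure.map_id, hscale]
  -- joint law
  have hjointmeas : Measurable (fun ω (i : Fin (m+1)) => (X0 i ω, X1 i ω - c * X0 i ω)) :=
    measurable_pi_iff.mpr fun i => (hmeas0 i).prodMk (hmeasY i)
  have hjoint : Measure.map (fun ω (i : Fin (m+1)) => (X0 i ω, X1 i ω - c * X0 i ω)) P
      = Measure.pi (fun _ => μ.prod ν) := by
    rw [iIndepFun_map_pi P _ (fun i => (hmeas0 i).prodMk (hmeasY i)) hUindep]
    exact congrArg Measure.pi (funext fun i => hUlaw i)
  -- split into two vectors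
  have hsplit : Measure.map
      (fun ω => ((fun i => X0 i ω), (fun i => X1 i ω - c * X0 i ω))) P
      = (Measure.pi fun _ : Fin (m+1) => μ).prod (Measure.pi fun _ : Fin (m+1) => ν) := by
    have hcomp : (fun ω => ((fun i => X0 i ω), (fun i => X1 i ω - c * X0 i ω)))
        = (MeasurableEquiv.arrowProdEquivProdArrow ℝ ℝ (Fin (m+1)))
          ∘ (fun ω (i : Fin (m+1)) => (X0 i ω, X1 i ω - c * X0 i ω)) := rfl
    rw [hcomp, ← Measure.map_map (MeasurableEquiv.measurable _) hjointmeas, hjoint,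
      (measurePreserving_arrowProdEquivProdArrow ℝ ℝ (Fin (m+1)) (fun _ => μ)
        (fun _ => ν)).map_eq]
  have hZmeas : Measurable (fun ω (i : Fin (m+1)) => X0 i ω) :=
    measurable_pi_iff.mpr hmeas0
  have hYmeas : Measurable (fun ω (i : Fin (m+1)) => X1 i ω - c * X0 i ω) :=
    measurable_pi_iff.mpr hmeasY
  have hZlaw : Measure.map (fun ω (i : Fin (m+1)) => X0 i ω) P
      = Measure.pi (fun _ : Fin (m+1) => μ) := by
    have h1 : (fun ω (i : Fin (m+1)) => X0 i ω)
        = Prod.fst ∘ (fun ω => ((fun i => X0 i ω), (fun i => X1 i ω - c * X0 i ω))) := rfl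
    rw [h1, ← Measure.map_map measurable_fst (hZmeas.prodMk hYmeas), hsplit,
      Measure.map_fst_prod]
    simp
  have hYlaw : Measure.map (fun ω (i : Fin (m+1)) => X1 i ω - c * X0 i ω) P
      = Measure.pi (fun _ : Fin (m+1) => ν) := by
    have h1 : (fun ω (i : Fin (m+1)) => X1 i ω - c * X0 i ω)
        = Prod.snd ∘ (fun ω => ((fun i => X0 i ω), (fun i => X1 i ω - c * X0 i ω))) := rfl
    rw [h1, ← Measure.map_map measurable_snd (hZmeas.prodMk hYmeas), hsplit,
      Measure.map_snd_prod]
    simp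
  -- independence of vectors
  have hindepZY : IndepFun (fun ω (i : Fin (m+1)) => X0 i ω)
      (fun ω (i : Fin (m+1)) => X1 i ω - c * X0 i ω) P := by
    rw [indepFun_iff_map_prod_eq_prod_map_map hZmeas.aemeasurable hYmeas.aemeasurable,
      hZlaw, hYlaw]
    exact hsplit
  refine ⟨?_, ?_, ?_⟩
  · -- independence
    exact ((hindepZY.symm).comp (zetaF_measurable m δ) (zetaF_measurable m δ) :)
  · -- equal laws
    have h1 : Measure.map
        (fun ω => δ * Real.sqrt (∑ i : Fin m, (X1 i.castSucc ω - c * X0 i.castSucc ω) ^ 2)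
          + Real.sqrt (1 - δ ^ 2) * (X1 (Fin.last m) ω - c * X0 (Fin.last m) ω)) P
        = Measure.map (zetaF m δ) (Measure.pi fun _ : Fin (m+1) => ν) := by
      rw [← hYlaw, Measure.map_map (zetaF_measurable m δ) hYmeas]
      rfl
    have hhom : ∀ z : Fin (m+1) → ℝ, s * zetaF m δ z = zetaF m δ (fun i => s * z i) := by
      intro z
      unfold zetaF
      have hsum : ∑ i : Fin m, (s * z i.castSucc) ^ 2
          = s ^ 2 * ∑ i : Fin m, (z i.castSucc) ^ 2 := by
        rw [Finset.mul_sum]; exact Finset.sum_congr rfl fun i _ => by ring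
      rw [hsum, Real.sqrt_mul (sq_nonneg s), Real.sqrt_sq hs0]
      ring
    have hscalepi : Measure.map (fun (x : Fin (m+1) → ℝ) i => s * x i)
        (Measure.pi fun _ : Fin (m+1) => μ) = Measure.pi fun _ : Fin (m+1) => ν :=
      (measurePreserving_pi (fun _ => μ) (fun _ => ν)
        (fun _ => ⟨measurable_id.const_mul s, hscale⟩)).map_eq
    have h2 : Measure.map
        (fun ω => Real.sqrt (1 - c ^ 2) *
            (δ * Real.sqrt (∑ i : Fin m, (X0 i.castSucc ω) ^ 2)
              + Real.sqrt (1 - δ ^ 2) * X0 (Fin.last m) ω)) P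
        = Measure.map (zetaF m δ) (Measure.pi fun _ : Fin (m+1) => ν) := by
      have heq : (fun ω => Real.sqrt (1 - c ^ 2) *
            (δ * Real.sqrt (∑ i : Fin m, (X0 i.castSucc ω) ^ 2)
              + Real.sqrt (1 - δ ^ 2) * X0 (Fin.last m) ω))
          = (zetaF m δ) ∘ (fun (x : Fin (m+1) → ℝ) i => s * x i)
            ∘ (fun ω (i : Fin (m+1)) => X0 i ω) := by
        funext ω
        exact hhom (fun i => X0 i ω)
      rw [heq, ← Function.comp_assoc,
        ← Measure.map_map ((zetaF_measurable m δ).comp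
          (measurable_pi_iff.mpr fun i => (measurable_pi_apply i).const_mul s)) hZmeas,
        hZlaw, ← Measure.map_map (zetaF_measurable m δ)
          (measurable_pi_iff.mpr fun i => (measurable_pi_apply i).const_mul s), hscalepi]
    rw [h1, h2]
  · -- pointwise bound
    intro u ω h1 h2
    set t : ℝ := Real.sqrt (1 - δ ^ 2) with ht_def
    have ht : 0 ≤ t := Real.sqrt_nonneg _
    set a : EuclideanSpace ℝ (Fin m) := WithLp.toLp 2 (fun i : Fin m => X1 i.castSucc ω) with ha_def
    set b : EuclideanSpace ℝ (Fin m) := WithLp.toLp 2 (fun i : Fin m => X0 i.castSucc ω) with hb_def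
    have hna : Real.sqrt (∑ i : Fin m, (X1 i.castSucc ω) ^ 2) = ‖a‖ := by
      rw [EuclideanSpace.norm_eq]
      congr 1
      exact Finset.sum_congr rfl fun i _ => by
        simp [ha_def, Real.norm_eq_abs, sq_abs]
    have hnb : Real.sqrt (∑ i : Fin m, (X0 i.castSucc ω) ^ 2) = ‖b‖ := by
      rw [EuclideanSpace.norm_eq]
      congr 1
      exact Finset.sum_congr rfl fun i _ => by
        simp [hb_def, Real.norm_eq_abs, sq_abs]
    have hnab : Real.sqrt (∑ i : Fin m, (X1 i.castSucc ω - c * X0 i.castSucc ω) ^ 2)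
        = ‖a - c • b‖ := by
      rw [EuclideanSpace.norm_eq]
      congr 1
      exact Finset.sum_congr rfl fun i _ => by
        simp [ha_def, hb_def, Real.norm_eq_abs, sq_abs, PiLp.sub_apply, PiLp.smul_apply,
          smul_eq_mul]
    have htri : ‖a‖ - c * ‖b‖ ≤ ‖a - c • b‖ := by
      have h := norm_sub_norm_le a (c • b)
      rwa [norm_smul, Real.norm_eq_abs, abs_of_nonneg hc0] at h
    rw [hnb] at h1 h2
    rw [hna] at h2
    rw [hnab]
    nlinarith [mul_le_mul_of_nonneg_left htri hδ0.le,
      mul_lt_mul_of_pos_left h1 (show (0:ℝ) < 1 - c by linarith)]
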